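/- Let M be a gasket automaton satisfying the γ-isolated condition, and let M' be a one-step simplification of M (either a (τ,κ)-simplification or a (τ,κ,λ)-simplification). Then M' is again a gasket automaton satisfying the γ-isolated condition. -/

import Mathlib

/-- A gasket automaton, described by its three edge relations
`P_{αβ}, P_{αγ}, P_{βγ} ⊆ Σ²` (`Pab i j` means `i ◁_{αβ} j`, etc.):
right- and left-uniqueness of each relation, the gathering condition, and the
boundary condition. -/
def IsGasketRel {N : ℕ} (α β γ : Fin N)
    (Pab Pag Pbg : Fin N → Fin N → Prop) : Prop :=
  -- right-uniqueness
  (∀ i j j', Pab i j → Pab i j' → j = j') ∧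
  (∀ i j j', Pag i j → Pag i j' → j = j') ∧
  (∀ i j j', Pbg i j → Pbg i j' → j = j') ∧
  -- left-uniqueness
  (∀ i i' j, Pab i j → Pab i' j → i = i') ∧
  (∀ i i' j, Pag i j → Pag i' j → i = i') ∧
  (∀ i i' j, Pbg i j → Pbg i' j → i = i') ∧
  -- gathering: any two of `a ◁_{αγ} c`, `a ◁_{βγ} b`, `b ◁_{αβ} c` imply the third
  (∀ a b c : Fin N,
    (Pag a c → Pbg a b → Pab b c) ∧
    (Pag a c → Pab b c → Pbg a b) ∧
    (Pbg a b → Pab b c → Pag a c)) ∧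
  -- boundary: α is αγ- and αβ-minimal, β is βγ- and βα-minimal,
  -- γ is γα- and γβ-minimal
  (∀ i, ¬ Pag i α) ∧ (∀ i, ¬ Pab i α) ∧
  (∀ i, ¬ Pbg i β) ∧ (∀ i, ¬ Pab β i) ∧
  (∀ i, ¬ Pag γ i) ∧ (∀ i, ¬ Pbg γ i)

/-- The γ-isolated condition: the graph `(Σ, P_{αγ} ∪ P_{βγ})` has no directed
cycle, and `γ` is isolated in all three relations. -/
def GammaIsolated {N : ℕ} (γ : Fin N)
    (Pab Pag Pbg : Fin N → Fin N → Prop) : Prop :=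
  (∀ x : Fin N, ¬ Relation.TransGen (fun a b => Pag a b ∨ Pbg a b) x x) ∧
  (∀ i, ¬ Pag i γ ∧ ¬ Pag γ i ∧ ¬ Pbg i γ ∧ ¬ Pbg γ i ∧ ¬ Pab i γ ∧ ¬ Pab γ i)

/-- a one-step simplification of a gasket automaton satisfying
the γ-isolated condition is again a gasket automaton satisfying the
γ-isolated condition. -/
theorem stmt11 {N : ℕ} (α β γ : Fin N)
    (Pab Pag Pbg P'ab P'ag P'bg : Fin N → Fin N → Prop)
    (hG : IsGasketRel α β γ Pab Pag Pbg)
    (hI : GammaIsolated γ Pab Pag Pbg)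
    (τ κ : Fin N) (hτκ : Pag τ κ)
    (hκmax1 : ∀ j, ¬ Pag κ j) (hκmax2 : ∀ j, ¬ Pbg κ j)
    -- M' is a (τ,κ)-simplification or a (τ,κ,λ)-simplification of M
    (hcase :
      ((∀ l, ¬ Pab l κ) ∧ P'ab = Pab ∧
        P'ag = (fun i j => Pag i j ∧ (i, j) ≠ (τ, κ)) ∧ P'bg = Pbg) ∨
      (∃ l, Pab l κ ∧ P'ab = Pab ∧
        P'ag = (fun i j => Pag i j ∧ (i, j) ≠ (τ, κ)) ∧
        P'bg = (fun i j => Pbg i j ∧ (i, j) ≠ (τ, l)))) :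
    IsGasketRel α β γ P'ab P'ag P'bg ∧ GammaIsolated γ P'ab P'ag P'bg := by

  obtain ⟨hRab, hRag, hRbg, hLab, hLag, hLbg, hGath, hBd⟩ := hG
  obtain ⟨hCyc, hIso⟩ := hI
  rcases hcase with ⟨hnopred, hab, hag, hbg⟩ | ⟨l, hlκ, hab, hag, hbg⟩
  · subst hab hag hbg
    refine ⟨⟨hRab, ?_, hRbg, hLab, ?_, hLbg, ?_, ?_, hBd.2.1, hBd.2.2.1, hBd.2.2.2.1,
      ?_, hBd.2.2.2.2.2⟩, ?_, ?_⟩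
    · exact fun i j j' h h' => hRag i j j' h.1 h'.1
    · exact fun i i' j h h' => hLag i i' j h.1 h'.1
    · intro a b c
      refine ⟨fun h1 h2 => ((hGath a b c).1 h1.1 h2),
        fun h1 h2 => ((hGath a b c).2.1 h1.1 h2), fun h1 h2 => ?_⟩
      refine ⟨(hGath a b c).2.2 h1 h2, ?_⟩
      intro he
      have ha : a = τ := (Prod.mk.injEq _ _ _ _ ▸ he).1
      have hc : c = κ := (Prod.mk.injEq _ _ _ _ ▸ he).2
      exact hnopred b (hc ▸ h2)
    · exact fun i h => hBd.1 i h.1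
    · exact fun i h => hBd.2.2.2.2.1 i h.1
    · intro x hx
      exact hCyc x (Relation.TransGen.mono (fun a b h => h.imp (fun h => h.1) id) x x hx)
    · intro i
      obtain ⟨h1, h2, h3, h4, h5, h6⟩ := hIso i
      exact ⟨fun h => h1 h.1, fun h => h2 h.1, h3, h4, h5, h6⟩
  · subst hab hag hbg
    have hτl : Pbg τ l := (hGath τ l κ).2.1 hτκ hlκ
    refine ⟨⟨hRab, ?_, ?_, hLab, ?_, ?_, ?_, ?_, hBd.2.1, ?_, hBd.2.2.2.1,
      ?_, ?_⟩, ?_, ?_⟩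
    · exact fun i j j' h h' => hRag i j j' h.1 h'.1
    · exact fun i j j' h h' => hRbg i j j' h.1 h'.1
    · exact fun i i' j h h' => hLag i i' j h.1 h'.1
    · exact fun i i' j h h' => hLbg i i' j h.1 h'.1
    · intro a b c
      refine ⟨fun h1 h2 => ((hGath a b c).1 h1.1 h2.1), fun h1 h2 => ?_, fun h1 h2 => ?_⟩
      · refine ⟨(hGath a b c).2.1 h1.1 h2, ?_⟩
        intro he
        have ha : a = τ := (Prod.mk.injEq _ _ _ _ ▸ he).1
        have hb : b = l := (Prod.mk.injEq _ _ _ _ ▸ he).2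
        have hc : c = κ := hRag a c κ h1.1 (ha ▸ hτκ)
        exact h1.2 (by rw [ha, hc])
      · refine ⟨(hGath a b c).2.2 h1.1 h2, ?_⟩
        intro he
        have ha : a = τ := (Prod.mk.injEq _ _ _ _ ▸ he).1
        have hc : c = κ := (Prod.mk.injEq _ _ _ _ ▸ he).2
        have hb : b = l := hLab b l c h2 (hc ▸ hlκ)
        exact h1.2 (by rw [ha, hb])
    · exact fun i h => hBd.1 i h.1
    · exact fun i h => hBd.2.2.1 i h.1
    · exact fun i h => hBd.2.2.2.2.1 i h.1
    · exact fun i h => hBd.2.2.2.2.2 i h.1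
    · intro x hx
      exact hCyc x (Relation.TransGen.mono (fun a b h => h.imp (fun h => h.1) (fun h => h.1)) x x hx)
    · intro i
      obtain ⟨h1, h2, h3, h4, h5, h6⟩ := hIso i
      exact ⟨fun h => h1 h.1, fun h => h2 h.1, fun h => h3 h.1, fun h => h4 h.1, h5, h6⟩
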